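/- Let μ₃ be the scale-3 self-similar measure on ℝ³ for B = {(0,0,0),(1/2,0,0),(0,1/2,0),(0,0,1/2)} and R = 3I₃, i.e., μ̂₃(t) = ∏_{n≥0} χ_B(t/3ⁿ) with χ_B(t) = (1/4)(1 + e^{iπt₁} + e^{iπt₂} + e^{iπt₃}). Then the points (0,0,0) and (4,4,0) both lie in P₃(L) = { l₀ + 3l₁ + 9l₂ + ⋯ : lᵢ ∈ L } with L = {(0,0,0),(1,1,0),(1,0,1),(0,1,1)}, but μ̂₃(4,4,0) ≠ 0, so e_{(0,0,0)} and e_{(4,4,0)} are not orthogonal in L²(μ₃). -/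

import Mathlib

open MeasureTheory Filter

/-- `P₃(L) = { l₀ + 3l₁ + 9l₂ + ⋯ : lᵢ ∈ L }` for
`L = {(0,0,0), (1,1,0), (1,0,1), (0,1,1)}`. -/
def P19 : Set (Fin 3 → ℝ) :=
  {lam | ∃ (n : ℕ) (l : ℕ → (Fin 3 → ℝ)),
    (∀ i, l i ∈ ({![0,0,0], ![1,1,0], ![1,0,1], ![0,1,1]} : Set (Fin 3 → ℝ))) ∧
    lam = ∑ i ∈ Finset.range n, ((3 : ℝ) ^ i) • l i}

noncomputable def phiET (μ : Measure (Fin 3 → ℝ)) (s : ℝ) : ℂ :=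
  ∫ x, Complex.exp (((2 * Real.pi * s * (x 0 + x 1) : ℝ) : ℂ) * Complex.I) ∂μ

lemma integrable_bdd_cont (μ : Measure (Fin 3 → ℝ)) [IsProbabilityMeasure μ]
    (g : (Fin 3 → ℝ) → ℝ) (hg : Continuous g) (C : ℝ) (hC : ∀ x, |g x| ≤ C) :
    Integrable g μ :=
  ⟨hg.aestronglyMeasurable, HasFiniteIntegral.of_bounded (C := C) (ae_of_all _ hC)⟩

lemma expint_split (μ : Measure (Fin 3 → ℝ)) [IsProbabilityMeasure μ]
    (g : (Fin 3 → ℝ) → ℝ) (hg : Continuous g) :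
    ∫ x, Complex.exp ((g x : ℂ) * Complex.I) ∂μ
      = ((∫ x, Real.cos (g x) ∂μ : ℝ) : ℂ) + ((∫ x, Real.sin (g x) ∂μ : ℝ) : ℂ) * Complex.I := by
  have hcos : Integrable (fun x => Real.cos (g x)) μ :=
    integrable_bdd_cont μ _ (Real.continuous_cos.comp hg) 1 (fun x => Real.abs_cos_le_one _)
  have hsin : Integrable (fun x => Real.sin (g x)) μ :=
    integrable_bdd_cont μ _ (Real.continuous_sin.comp hg) 1 (fun x => Real.abs_sin_le_one _)
  have h1 : ∀ x, Complex.exp ((g x : ℂ) * Complex.I)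
      = ((Real.cos (g x) : ℝ) : ℂ) + ((Real.sin (g x) : ℝ) : ℂ) * Complex.I := by
    intro x
    rw [Complex.exp_mul_I, Complex.ofReal_cos, Complex.ofReal_sin]
  simp only [h1]
  have hsinC : Integrable (fun x => ((Real.sin (g x) : ℝ) : ℂ)) μ := hsin.ofReal
  have hI : Integrable (fun x => ((Real.sin (g x) : ℝ) : ℂ) * Complex.I) μ :=
    hsinC.mul_const Complex.I
  have i1 : ∫ x, ((Real.cos (g x) : ℝ) : ℂ) ∂μ = ((∫ x, Real.cos (g x) ∂μ : ℝ) : ℂ) :=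
    integral_ofReal
  have i2 : ∫ x, ((Real.sin (g x) : ℝ) : ℂ) ∂μ = ((∫ x, Real.sin (g x) ∂μ : ℝ) : ℂ) :=
    integral_ofReal
  have hcosC : Integrable (fun x => ((Real.cos (g x) : ℝ) : ℂ)) μ := hcos.ofReal
  rw [integral_add hcosC hI, integral_mul_const, i1, i2]

lemma phiET_step (μ : Measure (Fin 3 → ℝ)) [IsProbabilityMeasure μ]
    (hμ : ∀ f : (Fin 3 → ℝ) → ℝ, Continuous f →
      ∫ x, f x ∂μ =
        (1 / 4) * ((∫ x, f ((3 : ℝ)⁻¹ • x) ∂μ)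
          + (∫ x, f ((3 : ℝ)⁻¹ • x + ![1/2, 0, 0]) ∂μ)
          + (∫ x, f ((3 : ℝ)⁻¹ • x + ![0, 1/2, 0]) ∂μ)
          + ∫ x, f ((3 : ℝ)⁻¹ • x + ![0, 0, 1/2]) ∂μ)) (s : ℝ) :
    phiET μ s = (1 / 2) * (1 + Complex.exp (((Real.pi * s : ℝ) : ℂ) * Complex.I)) * phiET μ (s / 3) := by
  set θ : (Fin 3 → ℝ) → ℝ := fun x => 2 * Real.pi * s * (x 0 + x 1) with hθ
  have hθc : Continuous θ := by
    apply Continuous.mul continuous_const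
    exact ((continuous_apply 0).add (continuous_apply 1))
  -- evaluate shifts
  have e0 : ∀ x : Fin 3 → ℝ, θ ((3:ℝ)⁻¹ • x) = 2 * Real.pi * (s/3) * (x 0 + x 1) := by
    intro x; simp only [hθ, Pi.smul_apply, smul_eq_mul]; ring
  have e1 : ∀ x : Fin 3 → ℝ, θ ((3:ℝ)⁻¹ • x + ![1/2,0,0])
      = 2 * Real.pi * (s/3) * (x 0 + x 1) + Real.pi * s := by
    intro x
    simp only [hθ, Pi.add_apply, Pi.smul_apply, smul_eq_mul]
    norm_num [Matrix.cons_val_zero, Matrix.cons_val_one, Matrix.head_cons]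
    ring
  have e2 : ∀ x : Fin 3 → ℝ, θ ((3:ℝ)⁻¹ • x + ![0,1/2,0])
      = 2 * Real.pi * (s/3) * (x 0 + x 1) + Real.pi * s := by
    intro x
    simp only [hθ, Pi.add_apply, Pi.smul_apply, smul_eq_mul]
    norm_num [Matrix.cons_val_zero, Matrix.cons_val_one, Matrix.head_cons]
    ring
  have e3 : ∀ x : Fin 3 → ℝ, θ ((3:ℝ)⁻¹ • x + ![0,0,1/2])
      = 2 * Real.pi * (s/3) * (x 0 + x 1) := by
    intro x
    simp only [hθ, Pi.add_apply, Pi.smul_apply, smul_eq_mul]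
    norm_num [Matrix.cons_val_zero, Matrix.cons_val_one, Matrix.head_cons]
    ring
  have hcos := hμ (fun x => Real.cos (θ x)) (Real.continuous_cos.comp hθc)
  have hsin := hμ (fun x => Real.sin (θ x)) (Real.continuous_sin.comp hθc)
  -- complex integrals of shifted exponentials
  have hcont3 : Continuous fun x : Fin 3 → ℝ => (3:ℝ)⁻¹ • x := continuous_const_smul _
  have hcontb : ∀ b : Fin 3 → ℝ, Continuous fun x : Fin 3 → ℝ => (3:ℝ)⁻¹ • x + b :=
    fun b => hcont3.add continuous_const
  have key : ∀ (T : (Fin 3 → ℝ) → (Fin 3 → ℝ)), Continuous T →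
      ∫ x, Complex.exp (((θ (T x) : ℝ) : ℂ) * Complex.I) ∂μ
        = ((∫ x, Real.cos (θ (T x)) ∂μ : ℝ) : ℂ)
          + ((∫ x, Real.sin (θ (T x)) ∂μ : ℝ) : ℂ) * Complex.I := by
    intro T hT
    exact expint_split μ (fun x => θ (T x)) (hθc.comp hT)
  -- the complex equation
  have lhs : phiET μ s = ((∫ x, Real.cos (θ x) ∂μ : ℝ) : ℂ)
      + ((∫ x, Real.sin (θ x) ∂μ : ℝ) : ℂ) * Complex.I :=
    expint_split μ θ hθc
  have h0 : ∫ x, Complex.exp (((θ ((3:ℝ)⁻¹ • x) : ℝ) : ℂ) * Complex.I) ∂μ = phiET μ (s/3) := by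
    rw [phiET]
    exact integral_congr_ae (ae_of_all _ fun x => by simp only [e0])
  have hshift : ∀ (T : (Fin 3 → ℝ) → (Fin 3 → ℝ)),
      (∀ x, θ (T x) = 2 * Real.pi * (s/3) * (x 0 + x 1) + Real.pi * s) →
      ∫ x, Complex.exp (((θ (T x) : ℝ) : ℂ) * Complex.I) ∂μ
        = Complex.exp (((Real.pi * s : ℝ) : ℂ) * Complex.I) * phiET μ (s/3) := by
    intro T hT
    rw [phiET, ← integral_const_mul]
    apply integral_congr_ae (ae_of_all _ fun x => ?_)
    simp only [hT x, ← Complex.exp_add]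
    congr 1
    push_cast
    ring
  have h1 := hshift (fun x => (3:ℝ)⁻¹ • x + ![1/2,0,0]) e1
  have h2 := hshift (fun x => (3:ℝ)⁻¹ • x + ![0,1/2,0]) e2
  have h3' : ∫ x, Complex.exp (((θ ((3:ℝ)⁻¹ • x + ![0,0,1/2]) : ℝ) : ℂ) * Complex.I) ∂μ
      = phiET μ (s/3) := by
    rw [phiET]
    exact integral_congr_ae (ae_of_all _ fun x => by simp only [e3])
  have k0 := key (fun x => (3:ℝ)⁻¹ • x) hcont3
  have k1 := key (fun x => (3:ℝ)⁻¹ • x + ![1/2,0,0]) (hcontb _)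
  have k2 := key (fun x => (3:ℝ)⁻¹ • x + ![0,1/2,0]) (hcontb _)
  have k3 := key (fun x => (3:ℝ)⁻¹ • x + ![0,0,1/2]) (hcontb _)
  rw [lhs, hcos, hsin]
  set E := Complex.exp (((Real.pi * s : ℝ) : ℂ) * Complex.I) with hE
  push_cast
  rw [show ∀ a b c d a' b' c' d' : ℂ, (1/4 : ℂ) * (a + b + c + d) + (1/4 : ℂ) * (a' + b' + c' + d') * Complex.I
      = (1/4) * ((a + a' * Complex.I) + (b + b' * Complex.I) + (c + c' * Complex.I) + (d + d' * Complex.I))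
    from fun a b c d a' b' c' d' => by ring]
  rw [← k0, ← k1, ← k2, ← k3, h0, h1, h2, h3']
  ring

lemma factor_ne_zero (k : ℕ) :
    (1 / 2 : ℂ) * (1 + Complex.exp (((Real.pi * (4 / 3 ^ k) : ℝ) : ℂ) * Complex.I)) ≠ 0 := by
  intro h
  have h2 : Complex.exp (((Real.pi * (4 / 3 ^ k) : ℝ) : ℂ) * Complex.I) = -1 := by
    rcases mul_eq_zero.mp h with h' | h'
    · norm_num at h'
    · linear_combination h'
  have h3 : Complex.exp (((Real.pi * (4 / 3 ^ k) : ℝ) : ℂ) * Complex.I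
      + (Real.pi : ℂ) * Complex.I) = 1 := by
    rw [Complex.exp_add, h2, Complex.exp_pi_mul_I]; ring
  rw [Complex.exp_eq_one_iff] at h3
  obtain ⟨n, hn⟩ := h3
  have hI : ((Real.pi * (4 / 3 ^ k) + Real.pi : ℝ) : ℂ) * Complex.I
      = (((n : ℝ) * (2 * Real.pi) : ℝ) : ℂ) * Complex.I := by
    push_cast at hn ⊢
    linear_combination hn
  have hR : Real.pi * (4 / 3 ^ k) + Real.pi = (n : ℝ) * (2 * Real.pi) :=
    Complex.ofReal_injective (mul_right_cancel₀ Complex.I_ne_zero hI)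
  have h4 : (4 : ℝ) / 3 ^ k + 1 = 2 * n := by
    have : Real.pi * ((4 : ℝ) / 3 ^ k + 1) = Real.pi * (2 * n) := by linear_combination hR
    exact mul_left_cancel₀ Real.pi_ne_zero this
  have h3k : (3 : ℝ) ^ k ≠ 0 := by positivity
  have h5 : (4 : ℝ) + 3 ^ k = 2 * n * 3 ^ k := by
    have := congrArg (fun t : ℝ => t * 3 ^ k) h4
    field_simp at this
    linarith
  have h6 : (4 : ℤ) + 3 ^ k = 2 * n * 3 ^ k := by exact_mod_cast h5
  have hodd : Odd ((2 * n - 1) * 3 ^ k : ℤ) :=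
    Odd.mul ⟨n - 1, by ring⟩ (Odd.pow ⟨1, by ring⟩)
  have h7 : ((2 * n - 1) * 3 ^ k : ℤ) = 4 := by linarith
  rw [h7] at hodd
  exact (by decide : ¬ Odd (4 : ℤ)) hodd

lemma phiET_tendsto (μ : Measure (Fin 3 → ℝ)) [IsProbabilityMeasure μ] :
    Filter.Tendsto (fun n : ℕ => phiET μ (4 / 3 ^ n)) Filter.atTop (nhds 1) := by
  have h1 : (1 : ℂ) = ∫ _x : Fin 3 → ℝ, (1 : ℂ) ∂μ := by simp
  rw [h1]
  apply tendsto_integral_of_dominated_convergence (bound := fun _ => 1)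
  · intro n
    apply Continuous.aestronglyMeasurable
    apply Complex.continuous_exp.comp
    apply Continuous.mul _ continuous_const
    apply Complex.continuous_ofReal.comp
    exact continuous_const.mul ((continuous_apply 0).add (continuous_apply 1))
  · exact integrable_const 1
  · intro n
    filter_upwards with x
    rw [Complex.norm_exp_ofReal_mul_I]
  · filter_upwards with x
    have hlim : Filter.Tendsto (fun n : ℕ => (2 * Real.pi * (4 / 3 ^ n) * (x 0 + x 1) : ℝ))
        Filter.atTop (nhds 0) := by
      have h3 : Filter.Tendsto (fun n : ℕ => ((1:ℝ)/3) ^ n) Filter.atTop (nhds 0) := by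
        apply tendsto_pow_atTop_nhds_zero_of_lt_one <;> norm_num
      have heq : (fun n : ℕ => (2 * Real.pi * (4 / 3 ^ n) * (x 0 + x 1) : ℝ))
          = fun n : ℕ => ((1:ℝ)/3) ^ n * (8 * Real.pi * (x 0 + x 1)) := by
        funext n
        rw [div_pow, one_pow]
        ring
      rw [heq]
      simpa using h3.mul_const (8 * Real.pi * (x 0 + x 1))
    have h2 : Filter.Tendsto
        (fun n : ℕ => (((2 * Real.pi * (4 / 3 ^ n) * (x 0 + x 1) : ℝ)) : ℂ) * Complex.I)
        Filter.atTop (nhds 0) := by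
      simpa using ((Complex.continuous_ofReal.tendsto 0).comp hlim).mul_const Complex.I
    simpa [Function.comp_def] using (Complex.continuous_exp.tendsto 0).comp h2

lemma phiET_zero_chain (μ : Measure (Fin 3 → ℝ)) [IsProbabilityMeasure μ]
    (hμ : ∀ f : (Fin 3 → ℝ) → ℝ, Continuous f →
      ∫ x, f x ∂μ =
        (1 / 4) * ((∫ x, f ((3 : ℝ)⁻¹ • x) ∂μ)
          + (∫ x, f ((3 : ℝ)⁻¹ • x + ![1/2, 0, 0]) ∂μ)
          + (∫ x, f ((3 : ℝ)⁻¹ • x + ![0, 1/2, 0]) ∂μ)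
          + ∫ x, f ((3 : ℝ)⁻¹ • x + ![0, 0, 1/2]) ∂μ))
    (h0 : phiET μ 4 = 0) : ∀ n : ℕ, phiET μ (4 / 3 ^ n) = 0 := by
  intro n
  induction n with
  | zero => simpa using h0
  | succ n ih =>
    have step := phiET_step μ hμ (4 / 3 ^ n)
    rw [ih] at step
    rcases mul_eq_zero.mp step.symm with h | h
    · exact absurd h (factor_ne_zero n)
    · have harg : (4 : ℝ) / 3 ^ n / 3 = 4 / 3 ^ (n + 1) := by
        rw [pow_succ]
        ring
      rwa [harg] at h

/-- For the scale-3 Eiffel Tower measure `μ₃`, the points `(0,0,0)` and `(4,4,0)` both lie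
in `P₃(L)`, yet `μ̂₃(4,4,0) ≠ 0`, so `e_{(0,0,0)}` and `e_{(4,4,0)}` are not orthogonal in
`L²(μ₃)`. -/
theorem scale_three_eiffel_not_orthogonal (μ : Measure (Fin 3 → ℝ))
    [IsProbabilityMeasure μ]
    (hμ : ∀ f : (Fin 3 → ℝ) → ℝ, Continuous f →
      ∫ x, f x ∂μ =
        (1 / 4) * ((∫ x, f ((3 : ℝ)⁻¹ • x) ∂μ)
          + (∫ x, f ((3 : ℝ)⁻¹ • x + ![1/2, 0, 0]) ∂μ)
          + (∫ x, f ((3 : ℝ)⁻¹ • x + ![0, 1/2, 0]) ∂μ)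
          + ∫ x, f ((3 : ℝ)⁻¹ • x + ![0, 0, 1/2]) ∂μ)) :
    (0 : Fin 3 → ℝ) ∈ P19 ∧ (![4, 4, 0] : Fin 3 → ℝ) ∈ P19 ∧
    ∫ x, Complex.exp
        ((((2 : ℝ) * Real.pi * ∑ i, (![4, 4, 0] : Fin 3 → ℝ) i * x i : ℝ) : ℂ) * Complex.I) ∂μ
      ≠ 0 := by
  refine ⟨⟨0, fun _ => ![0,0,0], fun i => Set.mem_insert _ _, by simp⟩,
    ⟨2, fun _ => ![1,1,0], fun i => by right; left; rfl, ?_⟩, ?_⟩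
  · rw [Finset.sum_range_succ, Finset.sum_range_one]
    funext j
    fin_cases j <;>
      simp [Pi.smul_apply, Matrix.cons_val_zero, Matrix.cons_val_one, Matrix.head_cons] <;>
      norm_num
  · have hrepr : ∫ x, Complex.exp
        ((((2 : ℝ) * Real.pi * ∑ i, (![4, 4, 0] : Fin 3 → ℝ) i * x i : ℝ) : ℂ) * Complex.I) ∂μ
        = phiET μ 4 := by
      rw [phiET]
      apply integral_congr_ae (ae_of_all _ fun x => ?_)
      congr 2
      rw [Fin.sum_univ_three]
      simp [Matrix.cons_val_zero, Matrix.cons_val_one, Matrix.head_cons]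
      ring
    rw [hrepr]
    intro h0
    have hchain := phiET_zero_chain μ hμ h0
    have h1 := phiET_tendsto μ
    have h2 : Filter.Tendsto (fun n : ℕ => phiET μ (4 / 3 ^ n)) Filter.atTop (nhds 0) := by
      have : (fun n : ℕ => phiET μ (4 / 3 ^ n)) = fun _ => (0 : ℂ) := funext hchain
      rw [this]
      exact tendsto_const_nhds
    exact one_ne_zero (tendsto_nhds_unique h1 h2)
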